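/- Let A be an n×n symplectic quaternionic matrix whose right eigenvalue similarity classes [q₁],…,[q_n] are ordered so that Re(q₁) ≤ … ≤ Re(q_n). If λ is a left eigenvalue of A with dim V(λ) ≥ k, then Re(q_k) ≤ Re(λ) ≤ Re(q_{n−k+1}); moreover if k > ⌈n/2⌉ then [q_{n−k+1}] = … = [q_k] = [λ]. -/

import Mathlib

open Quaternion Matrix

section Aux

lemma re_mul_comm (a b : ℍ[ℝ]) : (a * b).re = (b * a).re := by
  simp [Quaternion.re_mul]; ring

lemma re_conj_mul (c l : ℍ[ℝ]) : (star c * (l * c)).re = l.re * normSq c := by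
  rw [← mul_assoc, re_mul_comm, ← mul_assoc, Quaternion.self_mul_star]
  simp [Quaternion.re_mul]; ring

lemma re_star_self (a : ℍ[ℝ]) : (star a * a).re = normSq a := by
  simpa using re_conj_mul a 1

lemma re_sum {ι : Type*} (s : Finset ι) (f : ι → ℍ[ℝ]) :
    (∑ i ∈ s, f i).re = ∑ i ∈ s, (f i).re :=
  map_sum (show ℍ[ℝ] →ₗ[ℝ] ℝ from QuaternionAlgebra.reₗ _ _ _) f s

lemma conj_exists (p l : ℍ[ℝ]) (hre : p.re = l.re) (hn : normSq p = normSq l) :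
    ∃ r : ℍ[ℝ], r ≠ 0 ∧ p = r * l * r⁻¹ := by
  have key : ∃ r : ℍ[ℝ], r ≠ 0 ∧ p * r = r * l := by
    by_cases him : p.imI = -l.imI ∧ p.imJ = -l.imJ ∧ p.imK = -l.imK
    · obtain ⟨h1, h2, h3⟩ := him
      by_cases hz : p.imI = 0 ∧ p.imJ = 0
      · by_cases hk : p.imK = 0
        · refine ⟨1, one_ne_zero, ?_⟩
          have : p = l := by ext <;> simp_all <;> linarith
          rw [this, one_mul, mul_one]
        · have li : l.imI = 0 := by rw [← neg_eq_zero, ← h1]; exact hz.1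
          have lj : l.imJ = 0 := by rw [← neg_eq_zero, ← h2]; exact hz.2
          refine ⟨(Quaternion.equivProd ℝ).symm (0,1,0,0), ?_, ?_⟩
          · intro h; have := congrArg QuaternionAlgebra.imI h; simp at this
          · ext <;> simp [Quaternion.re_mul, Quaternion.imI_mul,
              Quaternion.imJ_mul, Quaternion.imK_mul, hz.1, hz.2, h1, h2, h3, hre, li, lj]
      · refine ⟨(Quaternion.equivProd ℝ).symm (0, p.imJ, -p.imI, 0), ?_, ?_⟩
        · intro h
          have hi := congrArg QuaternionAlgebra.imI h
          have hj := congrArg QuaternionAlgebra.imJ h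
          simp at hi hj
          exact hz ⟨hj, hi⟩
        · ext <;> simp [Quaternion.re_mul, Quaternion.imI_mul,
            Quaternion.imJ_mul, Quaternion.imK_mul, h1, h2, h3, hre] <;> ring
    · refine ⟨(Quaternion.equivProd ℝ).symm (0, p.imI + l.imI, p.imJ + l.imJ, p.imK + l.imK), ?_, ?_⟩
      · intro h
        have hi := congrArg QuaternionAlgebra.imI h
        have hj := congrArg QuaternionAlgebra.imJ h
        have hk := congrArg QuaternionAlgebra.imK h
        simp at hi hj hk
        exact him ⟨by linarith, by linarith, by linarith⟩
      · have hn' : p.imI^2 + p.imJ^2 + p.imK^2 = l.imI^2 + l.imJ^2 + l.imK^2 := by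
          have hsq : p.re^2 = l.re^2 := by rw [hre]
          simp only [Quaternion.normSq_def'] at hn
          linarith
        ext <;> simp [Quaternion.re_mul, Quaternion.imI_mul,
            Quaternion.imJ_mul, Quaternion.imK_mul, hre] <;> nlinarith [hn']
  obtain ⟨r, hr, hpr⟩ := key
  exact ⟨r, hr, by rw [← hpr, mul_assoc, mul_inv_cancel₀ hr, mul_one]⟩

noncomputable def eHop : ℍ[ℝ] ≃ₗ[ℍ[ℝ]ᵐᵒᵖ] ℍ[ℝ]ᵐᵒᵖ where
  toFun := MulOpposite.op
  invFun := MulOpposite.unop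
  map_add' := by intros; rfl
  map_smul' := by intro c x; simp only [RingHom.id_apply]; rfl
  left_inv := fun _ => rfl
  right_inv := fun _ => rfl

noncomputable def ePi (n : ℕ) : (Fin n → ℍ[ℝ]) ≃ₗ[ℍ[ℝ]ᵐᵒᵖ] (Fin n → ℍ[ℝ]ᵐᵒᵖ) :=
  LinearEquiv.piCongrRight (fun _ => eHop)

instance finH (n : ℕ) : Module.Finite ℍ[ℝ]ᵐᵒᵖ (Fin n → ℍ[ℝ]) :=
  Module.Finite.equiv (ePi n).symm

lemma finrank_fun_H (n : ℕ) : Module.finrank ℍ[ℝ]ᵐᵒᵖ (Fin n → ℍ[ℝ]) = n := by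
  rw [(ePi n).finrank_eq, Module.finrank_fin_fun]

lemma dot_sum {n m : ℕ} (w : Fin n → ℍ[ℝ]) (f : Fin m → Fin n → ℍ[ℝ]) :
    w ⬝ᵥ (∑ j, f j) = ∑ j, w ⬝ᵥ f j := by
  simp only [dotProduct, Finset.sum_apply, Finset.mul_sum]
  exact Finset.sum_comm

lemma dot_op_smul {n : ℕ} (w : Fin n → ℍ[ℝ]) (c : ℍ[ℝ]ᵐᵒᵖ) (x : Fin n → ℍ[ℝ]) :
    w ⬝ᵥ (c • x) = (w ⬝ᵥ x) * c.unop := by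
  simp [dotProduct, Finset.sum_mul, mul_assoc]

section expansion
variable {n : ℕ} (u : Fin n → Fin n → ℍ[ℝ])
  (horth : ∀ i j, star (u i) ⬝ᵥ u j = if i = j then 1 else 0)

include horth in
lemma u_dot_sum_smul (g : Fin n → ℍ[ℝ]ᵐᵒᵖ) (i : Fin n) :
    star (u i) ⬝ᵥ (∑ j, g j • u j) = (g i).unop := by
  rw [dot_sum]
  have h2 : ∀ j, star (u i) ⬝ᵥ (g j • u j) = (if i = j then 1 else 0) * (g j).unop := by
    intro j; rw [dot_op_smul, horth]
  rw [Finset.sum_congr rfl (fun j _ => h2 j)]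
  simp [Finset.sum_ite_eq]

include horth in
lemma u_li : LinearIndependent ℍ[ℝ]ᵐᵒᵖ u := by
  rw [Fintype.linearIndependent_iff]
  intro g hg i
  have := u_dot_sum_smul u horth g i
  rw [hg] at this
  simp at this
  exact MulOpposite.unop_injective this.symm

include horth in
lemma u_expand (hn : 0 < n) (v : Fin n → ℍ[ℝ]) (i : Fin n) :
    v i = ∑ j, u j i * (star (u j) ⬝ᵥ v) := by
  have hspan : Submodule.span ℍ[ℝ]ᵐᵒᵖ (Set.range u) = ⊤ := by
    haveI : Nonempty (Fin n) := ⟨⟨0, hn⟩⟩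
    exact (u_li u horth).span_eq_top_of_card_eq_finrank (by simp [finrank_fun_H])
  have hv : v ∈ Submodule.span ℍ[ℝ]ᵐᵒᵖ (Set.range u) := hspan ▸ Submodule.mem_top
  rw [Submodule.mem_span_range_iff_exists_fun] at hv
  obtain ⟨c, hc⟩ := hv
  have hcoef : ∀ m, star (u m) ⬝ᵥ v = (c m).unop := by
    intro m; rw [← hc]; exact u_dot_sum_smul u horth c m
  calc v i = (∑ j, c j • u j) i := by rw [hc]
    _ = ∑ j, u j i * (c j).unop := by simp [Finset.sum_apply]
    _ = ∑ j, u j i * (star (u j) ⬝ᵥ v) :=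
        Finset.sum_congr rfl (fun j _ => by rw [hcoef])

end expansion

lemma exists_vanishing {n : ℕ} (u : Fin n → Fin n → ℍ[ℝ])
    (V : Submodule ℍ[ℝ]ᵐᵒᵖ (Fin n → ℍ[ℝ])) (s : Finset (Fin n))
    (h : s.card < Module.finrank ℍ[ℝ]ᵐᵒᵖ V) :
    ∃ v ∈ V, v ≠ 0 ∧ ∀ j ∈ s, star (u j) ⬝ᵥ v = 0 := by
  let f : V →ₗ[ℍ[ℝ]ᵐᵒᵖ] ({x // x ∈ s} → ℍ[ℝ]ᵐᵒᵖ) :=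
    { toFun := fun x j => MulOpposite.op (star (u j.1) ⬝ᵥ (x : Fin n → ℍ[ℝ]))
      map_add' := by intro x y; funext j; simp [dotProduct_add]
      map_smul' := by
        intro c x; funext j
        simp only [RingHom.id_apply, Pi.smul_apply, Submodule.coe_smul, smul_eq_mul]
        rw [dot_op_smul, MulOpposite.op_mul, MulOpposite.op_unop] }
  have hker : LinearMap.ker f ≠ ⊥ := by
    intro hbot
    have hinj : Function.Injective f := LinearMap.ker_eq_bot.mp hbot
    have := LinearMap.finrank_le_finrank_of_injective hinj
    rw [Module.finrank_fintype_fun_eq_card, Fintype.card_coe] at this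
    omega
  obtain ⟨x, hx, hx0⟩ := (Submodule.ne_bot_iff _).mp hker
  refine ⟨x.1, x.2, ?_, ?_⟩
  · intro h0
    apply hx0
    exact Subtype.ext h0
  · intro j hj
    have h2 : MulOpposite.op (star (u j) ⬝ᵥ (x : Fin n → ℍ[ℝ])) = 0 :=
      congrFun (LinearMap.mem_ker.mp hx) ⟨j, hj⟩
    exact (MulOpposite.op_eq_zero_iff _).mp h2

lemma key_identity {n : ℕ} (hn : 0 < n) (A : Matrix (Fin n) (Fin n) ℍ[ℝ])
    (u : Fin n → Fin n → ℍ[ℝ])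
    (horth : ∀ i j, star (u i) ⬝ᵥ u j = if i = j then 1 else 0)
    (q : Fin n → ℍ[ℝ]) (heig : ∀ j, A.mulVec (u j) = fun l => u j l * q j)
    (lam : ℍ[ℝ]) (v : Fin n → ℍ[ℝ]) (hv : A.mulVec v = fun i => lam * v i) :
    lam.re * (∑ i, normSq (v i)) = ∑ j, (q j).re * normSq (star (u j) ⬝ᵥ v)
    ∧ (∑ i, normSq (v i)) = ∑ j, normSq (star (u j) ⬝ᵥ v) := by
  set c : Fin n → ℍ[ℝ] := fun j => star (u j) ⬝ᵥ v with hc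
  have hexp : ∀ i, v i = ∑ j, u j i * c j := u_expand u horth hn v
  have hstarc : ∀ j, star (c j) = ∑ i, star (v i) * u j i := by
    intro j
    simp only [hc, dotProduct, star_sum, Pi.star_apply]
    exact Finset.sum_congr rfl fun i _ => by rw [StarMul.star_mul, star_star]
  have hdotgen : ∀ (w e : Fin n → ℍ[ℝ]), (∀ i, w i = ∑ j, u j i * e j) →
      ∑ i, star (v i) * w i = ∑ j, star (c j) * e j := by
    intro w e hw
    calc ∑ i, star (v i) * w i = ∑ i, ∑ j, star (v i) * u j i * e j := by
          refine Finset.sum_congr rfl fun i _ => ?_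
          rw [hw i, Finset.mul_sum]
          simp [mul_assoc]
      _ = ∑ j, (∑ i, star (v i) * u j i) * e j := by
          rw [Finset.sum_comm]
          simp [Finset.sum_mul]
      _ = ∑ j, star (c j) * e j := by
          refine Finset.sum_congr rfl fun j _ => ?_; rw [hstarc]
  have hAv : ∀ i, A.mulVec v i = ∑ j, u j i * (q j * c j) := by
    intro i
    show (fun l => A i l) ⬝ᵥ v = _
    calc ∑ l, A i l * v l = ∑ l, ∑ j, A i l * u j l * c j := by
          refine Finset.sum_congr rfl fun l _ => ?_
          rw [hexp l, Finset.mul_sum]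
          simp [mul_assoc]
      _ = ∑ j, (∑ l, A i l * u j l) * c j := by
          rw [Finset.sum_comm]
          simp [Finset.sum_mul]
      _ = ∑ j, u j i * (q j * c j) := by
          refine Finset.sum_congr rfl fun j _ => ?_
          have h1 : (∑ l, A i l * u j l) = u j i * q j := by
            have := congrFun (heig j) i
            simpa [Matrix.mulVec, dotProduct] using this
          rw [h1, mul_assoc]
  have eq2 : ∑ i, star (v i) * v i = ∑ j, star (c j) * c j := hdotgen v c hexp
  have eq2' : (∑ i, normSq (v i)) = ∑ j, normSq (c j) := by
    have := congrArg QuaternionAlgebra.re eq2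
    rwa [re_sum, re_sum, Finset.sum_congr rfl (fun i _ => re_star_self (v i)),
      Finset.sum_congr rfl (fun j _ => re_star_self (c j))] at this
  have eq1 : ∑ i, star (v i) * (lam * v i) = ∑ j, star (c j) * (q j * c j) := by
    have h0 : ∀ i, A.mulVec v i = lam * v i := fun i => congrFun hv i
    have := hdotgen (A.mulVec v) (fun j => q j * c j) hAv
    rwa [Finset.sum_congr rfl (fun i _ => by rw [h0 i])] at this
  have eq1' : lam.re * (∑ i, normSq (v i)) = ∑ j, (q j).re * normSq (c j) := by
    have := congrArg QuaternionAlgebra.re eq1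
    rw [re_sum, re_sum, Finset.sum_congr rfl (fun i _ => re_conj_mul (v i) lam),
      Finset.sum_congr rfl (fun j _ => re_conj_mul (c j) (q j)), ← Finset.mul_sum] at this
    exact this
  exact ⟨eq1', eq2'⟩

lemma unitary_dot {n : ℕ} (A : Matrix (Fin n) (Fin n) ℍ[ℝ]) (hA : Aᴴ * A = 1)
    (v w : Fin n → ℍ[ℝ]) : star (A *ᵥ v) ⬝ᵥ (A *ᵥ w) = star v ⬝ᵥ w := by
  rw [star_mulVec, ← dotProduct_mulVec, mulVec_mulVec, hA, one_mulVec]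

end Aux

theorem symplectic_left_eigenvalue_bounds {n : ℕ}
    (A : Matrix (Fin n) (Fin n) ℍ[ℝ]) (hA : Aᴴ * A = 1)
    (q : Fin n → ℍ[ℝ]) (hq : Monotone fun j => (q j).re)
    (u : Fin n → Fin n → ℍ[ℝ])
    (horth : ∀ i j, star (u i) ⬝ᵥ u j = if i = j then 1 else 0)
    (heig : ∀ j, A.mulVec (u j) = fun l => u j l * q j)
    (lam : ℍ[ℝ]) (hlam : ¬ IsUnit (A - lam • (1 : Matrix (Fin n) (Fin n) ℍ[ℝ])))
    (V : Submodule ℍ[ℝ]ᵐᵒᵖ (Fin n → ℍ[ℝ]))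
    (hV : (V : Set (Fin n → ℍ[ℝ])) = {v | A.mulVec v = fun i => lam * v i})
    (k : ℕ) (hk : 1 ≤ k) (hkn : k ≤ n)
    (hdim : k ≤ Module.finrank ℍ[ℝ]ᵐᵒᵖ V) :
    ((q ⟨k - 1, by omega⟩).re ≤ lam.re ∧ lam.re ≤ (q ⟨n - k, by omega⟩).re) ∧
    ((n + 1) / 2 < k →
      ∀ j : Fin n, n - k ≤ (j : ℕ) → (j : ℕ) ≤ k - 1 →
        ∃ r : ℍ[ℝ], r ≠ 0 ∧ q j = r * lam * r⁻¹) := by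
  have hn : 0 < n := by omega
  have hVmem : ∀ v, v ∈ V → A.mulVec v = fun i => lam * v i := by
    intro v hv
    have : v ∈ (V : Set (Fin n → ℍ[ℝ])) := hv
    rw [hV] at this
    exact this
  -- each q j is a unit quaternion
  have hq1 : ∀ j, normSq (q j) = 1 := by
    intro j
    have h1 := unitary_dot A hA (u j) (u j)
    rw [horth j j, if_pos rfl, heig j] at h1
    have h2 : star (fun l => u j l * q j) ⬝ᵥ (fun l => u j l * q j)
        = star (q j) * ((star (u j) ⬝ᵥ u j) * q j) := by
      simp only [dotProduct, Finset.mul_sum, Finset.sum_mul, Pi.star_apply]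
      refine Finset.sum_congr rfl fun l _ => ?_
      rw [StarMul.star_mul]
      simp [mul_assoc]
    rw [h2, horth j j, if_pos rfl, one_mul, Quaternion.star_mul_self] at h1
    exact Quaternion.coe_injective (by rw [h1]; simp)
  -- a nonzero element of V
  have hVne : ∃ v ∈ V, v ≠ 0 := by
    apply (Submodule.ne_bot_iff V).mp
    intro hbot
    rw [hbot, finrank_bot] at hdim
    omega
  obtain ⟨v0, hv0V, hv00⟩ := hVne
  have hpos : ∀ (v : Fin n → ℍ[ℝ]), v ≠ 0 → 0 < ∑ i, normSq (v i) := by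
    intro v hv
    obtain ⟨i, hi⟩ := Function.ne_iff.mp hv
    exact Finset.sum_pos' (fun i _ => Quaternion.normSq_nonneg)
      ⟨i, Finset.mem_univ i, lt_of_le_of_ne Quaternion.normSq_nonneg
        (Ne.symm (Quaternion.normSq_ne_zero.mpr hi))⟩
  -- lam is a unit quaternion
  have hlam1 : normSq lam = 1 := by
    have h1 := unitary_dot A hA v0 v0
    rw [hVmem v0 hv0V] at h1
    have h2 : ∀ i, star (lam * v0 i) * (lam * v0 i) = ((normSq lam * normSq (v0 i) : ℝ) : ℍ[ℝ]) := by
      intro i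
      rw [Quaternion.star_mul_self, ← _root_.map_mul]
    have h3 : ∀ i, star (v0 i) * (v0 i) = ((normSq (v0 i) : ℝ) : ℍ[ℝ]) := by
      intro i; rw [Quaternion.star_mul_self]
    have h4 : star (fun i => lam * v0 i) ⬝ᵥ (fun i => lam * v0 i)
        = ∑ i, ((normSq lam * normSq (v0 i) : ℝ) : ℍ[ℝ]) := by
      simp only [dotProduct, Pi.star_apply]
      exact Finset.sum_congr rfl fun i _ => h2 i
    have h5 : star v0 ⬝ᵥ v0 = ∑ i, ((normSq (v0 i) : ℝ) : ℍ[ℝ]) := by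
      simp only [dotProduct, Pi.star_apply]
      exact Finset.sum_congr rfl fun i _ => h3 i
    rw [h4, h5] at h1
    have h6 := congrArg QuaternionAlgebra.re h1
    rw [re_sum, re_sum] at h6
    simp only [Quaternion.re_coe] at h6
    rw [← Finset.mul_sum] at h6
    have hT := hpos v0 hv00
    have := mul_right_cancel₀ (ne_of_gt hT) (h6.trans (one_mul _).symm)
    exact this
  -- bound machinery
  have hlow : ∀ (s : Finset (Fin n)) (m : ℝ), s.card < k →
      (∀ j, j ∉ s → m ≤ (q j).re) → m ≤ lam.re := by
    intro s m hcard hmono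
    obtain ⟨v, hvV, hv0, hvan⟩ := exists_vanishing u V s (by omega)
    obtain ⟨key1, key2⟩ := key_identity hn A u horth q heig lam v (hVmem v hvV)
    have hT := hpos v hv0
    have hle : m * (∑ i, normSq (v i)) ≤ lam.re * (∑ i, normSq (v i)) := by
      rw [key1, key2, Finset.mul_sum]
      refine Finset.sum_le_sum fun j _ => ?_
      by_cases hj : j ∈ s
      · rw [hvan j hj]; simp
      · exact mul_le_mul_of_nonneg_right (hmono j hj) Quaternion.normSq_nonneg
    exact le_of_mul_le_mul_right hle hT
  have hhigh : ∀ (s : Finset (Fin n)) (m : ℝ), s.card < k →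
      (∀ j, j ∉ s → (q j).re ≤ m) → lam.re ≤ m := by
    intro s m hcard hmono
    obtain ⟨v, hvV, hv0, hvan⟩ := exists_vanishing u V s (by omega)
    obtain ⟨key1, key2⟩ := key_identity hn A u horth q heig lam v (hVmem v hvV)
    have hT := hpos v hv0
    have hle : lam.re * (∑ i, normSq (v i)) ≤ m * (∑ i, normSq (v i)) := by
      rw [key1, key2, Finset.mul_sum]
      refine Finset.sum_le_sum fun j _ => ?_
      by_cases hj : j ∈ s
      · rw [hvan j hj]; simp
      · exact mul_le_mul_of_nonneg_right (hmono j hj) Quaternion.normSq_nonneg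
    exact le_of_mul_le_mul_right hle hT
  have part1a : (q ⟨k - 1, by omega⟩).re ≤ lam.re := by
    refine hlow (Finset.Iio ⟨k - 1, by omega⟩) _ ?_ ?_
    · rw [Fin.card_Iio]; show k - 1 < k; omega
    · intro j hj
      rw [Finset.mem_Iio, not_lt] at hj
      exact hq hj
  have part1b : lam.re ≤ (q ⟨n - k, by omega⟩).re := by
    refine hhigh (Finset.Ioi ⟨n - k, by omega⟩) _ ?_ ?_
    · rw [Fin.card_Ioi]; show n - 1 - (n - k) < k; omega
    · intro j hj
      rw [Finset.mem_Ioi, not_lt] at hj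
      exact hq hj
  refine ⟨⟨part1a, part1b⟩, ?_⟩
  intro _ j hj1 hj2
  have e1 : (q j).re ≤ (q ⟨k - 1, by omega⟩).re := hq (by simpa [Fin.le_def] using hj2)
  have e2 : (q ⟨n - k, by omega⟩).re ≤ (q j).re := hq (by simpa [Fin.le_def] using hj1)
  have hre : (q j).re = lam.re := le_antisymm (e1.trans part1a) (part1b.trans e2)
  exact conj_exists (q j) lam hre (by rw [hq1 j, hlam1])
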